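/- For every k ≥ 1, the base-b number 10...0β (a leading 1, k−1 zeros, and final digit β = b−1), i.e., b^k + (b−1), is a dismal prime. In particular there are infinitely many dismal primes in every base b ≥ 2. -/

import Mathlib

/-- The `i`-th base-`b` digit of `n`. -/
def digit (b n i : ℕ) : ℕ := n / b ^ i % b

/-- Dismal addition in base `b`: digitwise maximum of base-`b` digits. -/
def dadd (b m n : ℕ) : ℕ :=
  ∑ i ∈ Finset.range (m + n + 1), max (digit b m i) (digit b n i) * b ^ i

/-- Dismal multiplication in base `b`: digit convolution with `min` as digit
product and `max` as digit sum (no carries). -/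
def dmul (b m n : ℕ) : ℕ :=
  ∑ k ∈ Finset.range (m + n + 1),
    ((Finset.range (k + 1)).sup fun i => min (digit b m i) (digit b n (k - i))) * b ^ k

/-- The number of base-`b` digits of `n`. -/
def dlen (b n : ℕ) : ℕ := (Nat.digits b n).length

/-- A base-`b` dismal prime: a number other than `b - 1` whose only dismal
factorizations are `(b - 1) ⊠ p`. -/
def DPrime (b p : ℕ) : Prop :=
  p ≠ b - 1 ∧ ∀ m n : ℕ, dmul b m n = p →
    (m = b - 1 ∧ n = p) ∨ (m = p ∧ n = b - 1)

lemma digit_lt {b : ℕ} (hb : 0 < b) (n i : ℕ) : digit b n i < b :=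
  Nat.mod_lt _ hb

lemma digit_zero_of_lt {b n i : ℕ} (h : n < b ^ i) : digit b n i = 0 := by
  unfold digit; rw [Nat.div_eq_of_lt h, Nat.zero_mod]

lemma sum_digits_lt {b : ℕ} (hb : 0 < b) (c : ℕ → ℕ) (hc : ∀ i, c i < b) (L : ℕ) :
    ∑ i ∈ Finset.range L, c i * b ^ i < b ^ L := by
  induction L with
  | zero => simp
  | succ L ih =>
    rw [Finset.sum_range_succ, pow_succ]
    have h1 : c L * b ^ L ≤ (b - 1) * b ^ L :=
      Nat.mul_le_mul_right _ (by have := hc L; omega)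
    have h2 : b ^ L + (b-1) * b ^ L = b ^ L * b := by
      have : b ^ L * b = b ^ L * (1 + (b-1)) := by congr 1; omega
      rw [this, mul_add, mul_one, mul_comm]
    omega

lemma digit_sum {b : ℕ} (hb : 0 < b) (c : ℕ → ℕ) (hc : ∀ i, c i < b) (L j : ℕ)
    (hj : j < L) : digit b (∑ i ∈ Finset.range L, c i * b ^ i) j = c j := by
  have hsplit : ∑ i ∈ Finset.range L, c i * b ^ i =
      (∑ i ∈ Finset.range j, c i * b ^ i) + c j * b ^ j +
        b ^ (j+1) * ∑ i ∈ Finset.Ico (j+1) L, c i * b ^ (i - (j+1)) := by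
    rw [Finset.mul_sum]
    rw [Finset.range_eq_Ico, ← Finset.sum_Ico_consecutive _ (Nat.zero_le (j+1)) hj,
      Finset.sum_Ico_succ_top (Nat.zero_le j), ← Finset.range_eq_Ico]
    congr 1
    apply Finset.sum_congr rfl
    intro i hi
    have hi' : j + 1 ≤ i := (Finset.mem_Ico.mp hi).1
    rw [← mul_assoc, mul_comm (b ^ (j+1)) (c i), mul_assoc, ← pow_add]
    congr 2
    omega
  have hA : (∑ i ∈ Finset.range j, c i * b ^ i) < b ^ j := sum_digits_lt hb c hc j
  rw [hsplit]
  unfold digit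
  have : (∑ i ∈ Finset.range j, c i * b ^ i) + c j * b ^ j +
      b ^ (j+1) * ∑ i ∈ Finset.Ico (j+1) L, c i * b ^ (i - (j+1)) =
      (∑ i ∈ Finset.range j, c i * b ^ i) +
        b ^ j * (c j + b * ∑ i ∈ Finset.Ico (j+1) L, c i * b ^ (i - (j+1))) := by
    ring
  rw [this, Nat.add_mul_div_left _ _ (Nat.pow_pos (n := j) hb), Nat.div_eq_of_lt hA,
    zero_add, Nat.add_mul_mod_self_left, Nat.mod_eq_of_lt (hc j)]

lemma sum_digit_self {b : ℕ} (hb : 0 < b) {n L : ℕ} (h : n < b ^ L) :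
    ∑ i ∈ Finset.range L, digit b n i * b ^ i = n := by
  have key : ∀ M, ∑ i ∈ Finset.range M, digit b n i * b ^ i = n % b ^ M := by
    intro M
    induction M with
    | zero => simp [Nat.mod_one]
    | succ M ih =>
      rw [Finset.sum_range_succ, ih, pow_succ, Nat.mod_mul]
      unfold digit
      ring
  rw [key L, Nat.mod_eq_of_lt h]

lemma p_repr {b k : ℕ} (hk : 1 ≤ k) :
    ∑ i ∈ Finset.range (k+1), (if i = 0 then b - 1 else if i = k then 1 else 0) * b ^ i
      = b ^ k + (b - 1) := by
  have h : ∀ i ∈ Finset.range (k+1), (if i = 0 then b - 1 else if i = k then 1 else 0) * b ^ i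
      = (if i = 0 then (b - 1) * b ^ i else 0) + (if i = k then b ^ i else 0) := by
    intro i _
    by_cases h1 : i = 0
    · subst h1; have : (0:ℕ) ≠ k := by omega
      simp [this]
    · by_cases h2 : i = k
      · subst h2; simp [h1]
      · simp [h1, h2]
  rw [Finset.sum_congr rfl h, Finset.sum_add_distrib]
  rw [Finset.sum_ite_eq' (Finset.range (k+1)) 0 (fun i => (b-1) * b ^ i),
    Finset.sum_ite_eq' (Finset.range (k+1)) k (fun i => b ^ i)]
  simp [Finset.mem_range]
  omega

lemma digit_p {b k : ℕ} (hb : 2 ≤ b) (hk : 1 ≤ k) (j : ℕ) :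
    digit b (b ^ k + (b - 1)) j = if j = 0 then b - 1 else if j = k then 1 else 0 := by
  have hb0 : 0 < b := by omega
  have hc : ∀ i, (if i = 0 then b - 1 else if i = k then 1 else 0) < b := by
    intro i; split_ifs <;> omega
  by_cases hj : j < k + 1
  · rw [← p_repr (b := b) hk, digit_sum hb0 _ hc (k+1) j hj]
  · have hplt : b ^ k + (b - 1) < b ^ j := by
      have h1 : b ^ k + (b - 1) < b ^ (k+1) := by
        rw [← p_repr (b := b) hk]
        exact sum_digits_lt hb0 _ hc (k+1)
      exact lt_of_lt_of_le h1 (Nat.pow_le_pow_right hb0 (by omega))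
    rw [digit_zero_of_lt hplt]
    have h0 : j ≠ 0 := by omega
    have hk' : j ≠ k := by omega
    simp [h0, hk']

/-- for every `k ≥ 1`, the number `b^k + (b-1)` (digits
`1 0 ⋯ 0 (b-1)`) is a dismal prime; in particular there are infinitely many
dismal primes in base `b`. -/
theorem dismal_prime_family (b : ℕ) (hb : 2 ≤ b) :
    (∀ k : ℕ, 1 ≤ k → DPrime b (b ^ k + (b - 1))) ∧
    {p : ℕ | DPrime b p}.Infinite := by
  have hb0 : 0 < b := by omega
  have main : ∀ k : ℕ, 1 ≤ k → DPrime b (b ^ k + (b - 1)) := by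
    intro k hk
    constructor
    · have : 0 < b ^ k := Nat.pow_pos hb0
      omega
    · intro m n h
      set c : ℕ → ℕ :=
        fun j => (Finset.range (j+1)).sup fun i => min (digit b m i) (digit b n (j - i)) with hcdef
      have hclt : ∀ j, c j < b := by
        intro j
        refine (Finset.sup_lt_iff (by simpa using hb0)).mpr ?_
        intro i _
        exact lt_of_le_of_lt (min_le_left _ _) (digit_lt hb0 m i)
      have hdmul : dmul b m n = ∑ j ∈ Finset.range (m+n+1), c j * b ^ j := rfl
      have hk' : k ≤ m + n := by
        by_contra hlt
        push_neg at hlt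
        have h1 : dmul b m n < b ^ (m+n+1) := by
          rw [hdmul]; exact sum_digits_lt hb0 c hclt _
        have h2 : b ^ (m+n+1) ≤ b ^ k := Nat.pow_le_pow_right hb0 (by omega)
        omega
      have hcd : ∀ j < m+n+1, c j = digit b (b ^ k + (b - 1)) j := by
        intro j hj
        rw [← h, hdmul, digit_sum hb0 c hclt _ j hj]
      have hpd : ∀ j, digit b (b ^ k + (b - 1)) j = if j = 0 then b - 1 else if j = k then 1 else 0 :=
        digit_p hb hk
      have hdle : ∀ x i, digit b x i ≤ b - 1 := fun x i => by have := digit_lt hb0 x i; omega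
      -- digit 0
      have hc0 : min (digit b m 0) (digit b n 0) = b - 1 := by
        have h1 := hcd 0 (by omega)
        rw [hpd 0] at h1
        simp only [hcdef] at h1
        simpa [Finset.range_one] using h1
      have hm0 : digit b m 0 = b - 1 := by have := hdle m 0; have := hdle n 0; omega
      have hn0 : digit b n 0 = b - 1 := by have := hdle m 0; have := hdle n 0; omega
      -- zero digits of m
      have hmz : ∀ j, 1 ≤ j → j ≠ k → digit b m j = 0 := by
        intro j h1 h2
        by_cases hjL : j < m+n+1
        · have hcj : c j = 0 := by
            rw [hcd j hjL, hpd j]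
            have : j ≠ 0 := by omega
            simp [this, h2]
          have hle : min (digit b m j) (digit b n (j - j)) ≤ c j := by
            simp only [hcdef]
            exact Finset.le_sup (f := fun i => min (digit b m i) (digit b n (j - i)))
              (Finset.self_mem_range_succ j)
          rw [Nat.sub_self, hn0] at hle
          have := hdle m j
          omega
        · apply digit_zero_of_lt
          calc m < 2 ^ m := Nat.lt_two_pow_self (n := m)
            _ ≤ 2 ^ j := Nat.pow_le_pow_right (by norm_num) (by omega)
            _ ≤ b ^ j := Nat.pow_le_pow_left hb j
      have hnz : ∀ j, 1 ≤ j → j ≠ k → digit b n j = 0 := by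
        intro j h1 h2
        by_cases hjL : j < m+n+1
        · have hcj : c j = 0 := by
            rw [hcd j hjL, hpd j]
            have : j ≠ 0 := by omega
            simp [this, h2]
          have hle : min (digit b m 0) (digit b n (j - 0)) ≤ c j := by
            simp only [hcdef]
            exact Finset.le_sup (f := fun i => min (digit b m i) (digit b n (j - i)))
              (Finset.mem_range.mpr (by omega))
          rw [Nat.sub_zero, hm0] at hle
          have := hdle n j
          omega
        · apply digit_zero_of_lt
          calc n < 2 ^ n := Nat.lt_two_pow_self (n := n)
            _ ≤ 2 ^ j := Nat.pow_le_pow_right (by norm_num) (by omega)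
            _ ≤ b ^ j := Nat.pow_le_pow_left hb j
      -- digit k
      have hck : c k = 1 := by
        rw [hcd k (by omega), hpd k]
        have : k ≠ 0 := by omega
        simp [this]
      have hmk_le : digit b m k ≤ 1 := by
        have hle : min (digit b m k) (digit b n (k - k)) ≤ c k := by
          simp only [hcdef]
          exact Finset.le_sup (f := fun i => min (digit b m i) (digit b n (k - i)))
            (Finset.self_mem_range_succ k)
        rw [Nat.sub_self, hn0] at hle
        have := hdle m k
        omega
      have hnk_le : digit b n k ≤ 1 := by
        have hle : min (digit b m 0) (digit b n (k - 0)) ≤ c k := by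
          simp only [hcdef]
          exact Finset.le_sup (f := fun i => min (digit b m i) (digit b n (k - i)))
            (Finset.mem_range.mpr (by omega))
        rw [Nat.sub_zero, hm0] at hle
        have := hdle n k
        omega
      have hone : digit b m k = 1 ∨ digit b n k = 1 := by
        by_contra hcon
        push_neg at hcon
        have hm' : digit b m k = 0 := by omega
        have hn' : digit b n k = 0 := by omega
        have hz : c k = 0 := by
          apply Nat.eq_zero_of_le_zero
          apply Finset.sup_le
          intro i hi
          rcases Nat.eq_zero_or_pos i with h0 | hpos
          · subst h0; simp [hn']
          · rcases eq_or_ne i k with he | hne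
            · subst he; simp [hm']
            · rw [hmz i hpos hne]; simp
        omega
      -- reconstruction
      have hrecon : ∀ x : ℕ, x ≤ m + n → digit b x 0 = b - 1 →
          (∀ j, 1 ≤ j → j ≠ k → digit b x j = 0) →
          x = (b - 1) + digit b x k * b ^ k := by
        intro x hxle hx0 hxz
        have hxlt : x < b ^ (m+n+1) := by
          calc x ≤ m + n := hxle
            _ < 2 ^ (m+n) := Nat.lt_two_pow_self
            _ ≤ 2 ^ (m+n+1) := Nat.pow_le_pow_right (by norm_num) (by omega)
            _ ≤ b ^ (m+n+1) := Nat.pow_le_pow_left hb _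
        conv_lhs => rw [← sum_digit_self hb0 hxlt]
        have hpt : ∀ j ∈ Finset.range (m+n+1), digit b x j * b ^ j =
            (if j = 0 then (b - 1) * b ^ j else 0) +
              (if j = k then digit b x k * b ^ j else 0) := by
          intro j _
          by_cases h0 : j = 0
          · subst h0
            have : (0:ℕ) ≠ k := by omega
            simp [this, hx0]
          · by_cases hk2 : j = k
            · subst hk2; simp [h0]
            · simp [h0, hk2, hxz j (by omega) hk2]
        rw [Finset.sum_congr rfl hpt, Finset.sum_add_distrib,
          Finset.sum_ite_eq' (Finset.range (m+n+1)) 0 (fun j => (b-1) * b ^ j),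
          Finset.sum_ite_eq' (Finset.range (m+n+1)) k (fun j => digit b x k * b ^ j)]
        have h0m : (0:ℕ) ∈ Finset.range (m+n+1) := Finset.mem_range.mpr (by omega)
        have hkm : k ∈ Finset.range (m+n+1) := Finset.mem_range.mpr (by omega)
        simp [h0m, hkm]
      have hm_eq := hrecon m (by omega) hm0 hmz
      have hn_eq := hrecon n (by omega) hn0 hnz
      have hbk : k < b ^ k := by
        calc k < 2 ^ k := Nat.lt_two_pow_self (n := k)
          _ ≤ b ^ k := Nat.pow_le_pow_left hb k
      have hnotboth : ¬ (digit b m k = 1 ∧ digit b n k = 1) := by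
        rintro ⟨h1, h2⟩
        rw [h1, one_mul] at hm_eq
        rw [h2, one_mul] at hn_eq
        have h2k : 2*k < m+n+1 := by omega
        have hc2k : c (2*k) = 0 := by
          rw [hcd _ h2k, hpd]
          have e1 : 2*k ≠ 0 := by omega
          have e2 : 2*k ≠ k := by omega
          simp [e1, e2]
        have hle : min (digit b m k) (digit b n (2*k - k)) ≤ c (2*k) := by
          simp only [hcdef]
          exact Finset.le_sup (f := fun i => min (digit b m i) (digit b n (2*k - i)))
            (Finset.mem_range.mpr (by omega))
        have he : 2*k - k = k := by omega
        rw [he, h1, h2] at hle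
        omega
      rcases hone with h1 | h1
      · right
        have hnk : digit b n k = 0 := by
          by_cases hnk1 : digit b n k = 1
          · exact absurd ⟨h1, hnk1⟩ hnotboth
          · omega
        rw [h1, one_mul] at hm_eq
        rw [hnk, zero_mul, add_zero] at hn_eq
        exact ⟨by omega, hn_eq⟩
      · have hmk : digit b m k = 0 := by
          by_cases hmk1 : digit b m k = 1
          · exact absurd ⟨hmk1, h1⟩ hnotboth
          · omega
        left
        rw [h1, one_mul] at hn_eq
        rw [hmk, zero_mul, add_zero] at hm_eq
        exact ⟨hm_eq, by omega⟩
  refine ⟨main, ?_⟩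
  apply Set.infinite_of_injective_forall_mem (f := fun k : ℕ => b ^ (k+1) + (b - 1))
  · intro x y hxy
    simp only at hxy
    have hpow : b ^ (x+1) = b ^ (y+1) := by omega
    have := Nat.pow_right_injective hb hpow
    omega
  · intro k
    exact main (k+1) (by omega)
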